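/- Let Q = ⟨X,A,S,τ⟩ ⊑ Q' = ⟨X',A',S',τ'⟩ be QBAFs for an explanandum e with X' = X ∪ {a} for some a ∉ X, and suppose every edge in (A'∪S')∖(A∪S) has a as an endpoint. Under the DF-QuAD evaluation σ: if σ(Q',e) > σ(Q,e) then a ∈ pro(⟨X',A',S'⟩), and if σ(Q',e) < σ(Q,e) then a ∈ con(⟨X',A',S'⟩). -/
import Mathlib


universe u v

variable {U : Type u} {Ag : Type v}

/-- A bipolar argumentation framework (BAF): arguments `X`, attacks `Att`, supports `Supp`. -/
structure BAF (U : Type u) where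
  X : Finset U
  Att : Finset (U × U)
  Supp : Finset (U × U)

namespace BAF

variable [DecidableEq U]

/-- The edges of a BAF: attacks together with supports. -/
def edges (B : BAF U) : Finset (U × U) := B.Att ∪ B.Supp

/-- A path from `a` to `b`: a nonempty list of consecutive edges `(c₀,c₁),…,(c_{n−1},cₙ)`
with `c₀ = a` and `cₙ = b`. -/
inductive IsPath (B : BAF U) : U → U → List (U × U) → Prop
  | single {a b : U} (h : (a, b) ∈ B.edges) : IsPath B a b [(a, b)]
  | cons {a c b : U} {p : List (U × U)} (h : (a, c) ∈ B.edges)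
      (hp : IsPath B c b p) : IsPath B a b ((a, c) :: p)

/-- `B ⊑ B'` for BAFs (componentwise inclusion). -/
def Sub (B B' : BAF U) : Prop := B.X ⊆ B'.X ∧ B.Att ⊆ B'.Att ∧ B.Supp ⊆ B'.Supp

/-- `B` is a BAF for the explanandum `e`. -/
structure IsFor (B : BAF U) (e : U) : Prop where
  e_mem : e ∈ B.X
  att_mem : ∀ p ∈ B.Att, p.1 ∈ B.X ∧ p.2 ∈ B.X
  supp_mem : ∀ p ∈ B.Supp, p.1 ∈ B.X ∧ p.2 ∈ B.X
  disj : ∀ p : U × U, ¬(p ∈ B.Att ∧ p ∈ B.Supp)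
  no_out : ∀ a : U, (e, a) ∉ B.edges
  reach : ∀ a ∈ B.X, a ≠ e → ∃ p, B.IsPath a e p
  acyclic : ∀ (a : U) (p : List (U × U)), ¬ B.IsPath a a p

/-- The number of attack edges occurring in a path. -/
def attCount (B : BAF U) (p : List (U × U)) : ℕ :=
  (p.filter (fun q => q ∈ B.Att)).length

/-- Pro arguments: arguments with a path to `e` containing an even number of attacks. -/
def pro (B : BAF U) (e : U) : Set U :=
  {a | a ∈ B.X ∧ ∃ p, B.IsPath a e p ∧ Even (B.attCount p)}

/-- Con arguments: arguments with a path to `e` containing an odd number of attacks. -/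
def con (B : BAF U) (e : U) : Set U :=
  {a | a ∈ B.X ∧ ∃ p, B.IsPath a e p ∧ Odd (B.attCount p)}

/-- The shortest path from `x` to `e` is strictly shorter than every path from `y` to `e`. -/
def SPlt (B : BAF U) (e x y : U) : Prop :=
  ∃ p, B.IsPath x e p ∧ ∀ q, B.IsPath y e q → p.length < q.length

end BAF

/-- A quantitative bipolar argumentation framework (QBAF), with base scores `bs`. -/
structure QBAF (U : Type u) where
  X : Finset U
  Att : Finset (U × U)
  Supp : Finset (U × U)
  bs : U → ℝ

namespace QBAF

variable [DecidableEq U]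

def toBAF (Q : QBAF U) : BAF U := ⟨Q.X, Q.Att, Q.Supp⟩

def edges (Q : QBAF U) : Finset (U × U) := Q.Att ∪ Q.Supp

/-- `Q` is a QBAF for `e`: its underlying BAF is for `e` and base scores lie in `[0,1]`. -/
def IsFor (Q : QBAF U) (e : U) : Prop :=
  Q.toBAF.IsFor e ∧ ∀ a ∈ Q.X, Q.bs a ∈ Set.Icc (0 : ℝ) 1

/-- `Q ⊑ Q'` for QBAFs. -/
def Sub (Q Q' : QBAF U) : Prop :=
  Q.X ⊆ Q'.X ∧ Q.Att ⊆ Q'.Att ∧ Q.Supp ⊆ Q'.Supp ∧ ∀ a ∈ Q.X, Q'.bs a = Q.bs a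

def attackers (Q : QBAF U) (a : U) : Finset U :=
  (Q.Att.filter (fun p => p.2 = a)).image Prod.fst

def supporters (Q : QBAF U) (a : U) : Finset U :=
  (Q.Supp.filter (fun p => p.2 = a)).image Prod.fst

end QBAF

/-- The DF-QuAD aggregation function on finite lists of values. -/
noncomputable def dfAgg : List ℝ → ℝ
  | [] => 0
  | v :: vs => v + dfAgg vs - v * dfAgg vs

/-- The DF-QuAD combination function. -/
noncomputable def dfComb (v0 vm vp : ℝ) : ℝ :=
  if vp ≤ vm then v0 - v0 * |vp - vm| else v0 + (1 - v0) * |vp - vm|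

/-- `f` is the DF-QuAD evaluation of the QBAF `Q`. -/
def IsDFQuADEval [DecidableEq U] (Q : QBAF U) (f : U → ℝ) : Prop :=
  ∀ a ∈ Q.X,
    f a = dfComb (Q.bs a) (dfAgg ((Q.attackers a).toList.map f))
        (dfAgg ((Q.supporters a).toList.map f))

/-- The stance determined by an evaluation value in `[0,1]`:
`−` (coded `-1`) on `[0,0.5)`, `0` on `{0.5}`, `+` (coded `1`) on `(0.5,1]`. -/
noncomputable def stanceVal (v : ℝ) : ℤ :=
  if v < 1 / 2 then -1 else if v = 1 / 2 then 0 else 1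

/-- An argumentative exchange (AX): exchange BAFs `B`, private QBAFs `Q`,
and a contributor mapping `contrib`. -/
structure AX (U : Type u) (Ag : Type v) where
  n : ℕ
  B : ℕ → BAF U
  Q : Ag → ℕ → QBAF U
  contrib : U × U → Ag × ℕ

namespace AX

variable [DecidableEq U]

/-- `E` is an AX for the explanandum `e` amongst the agents `Ag`. -/
structure IsAX (E : AX U Ag) (e : U) : Prop where
  n_pos : 0 < E.n
  agents : ∃ α β : Ag, α ≠ β
  B_for : ∀ t ≤ E.n, (E.B t).IsFor e
  B0_X : (E.B 0).X = {e}
  B0_Att : (E.B 0).Att = ∅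
  B0_Supp : (E.B 0).Supp = ∅
  B_mono : ∀ t < E.n, (E.B t).Sub (E.B (t + 1))
  Q_for : ∀ (α : Ag), ∀ t ≤ E.n, (E.Q α t).IsFor e
  Q_mono : ∀ (α : Ag), ∀ t < E.n, (E.Q α t).Sub (E.Q α (t + 1))
  Q_diff_X : ∀ (α : Ag), ∀ t < E.n,
    (E.Q α (t + 1)).X \ (E.Q α t).X ⊆ (E.B (t + 1)).X \ (E.B t).X
  Q_diff_Att : ∀ (α : Ag), ∀ t < E.n,
    (E.Q α (t + 1)).Att \ (E.Q α t).Att ⊆ (E.B (t + 1)).Att \ (E.B t).Att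
  Q_diff_Supp : ∀ (α : Ag), ∀ t < E.n,
    (E.Q α (t + 1)).Supp \ (E.Q α t).Supp ⊆ (E.B (t + 1)).Supp \ (E.B t).Supp
  learn_X : ∀ (α : Ag), ∀ t < E.n,
    (E.B (t + 1)).X \ (E.B t).X ⊆ (E.Q α (t + 1)).X
  learn_Att : ∀ (α : Ag), ∀ t < E.n,
    (E.B (t + 1)).Att \ (E.B t).Att ⊆ (E.Q α (t + 1)).Att
  learn_Supp : ∀ (α : Ag), ∀ t < E.n,
    (E.B (t + 1)).Supp \ (E.B t).Supp ⊆ (E.Q α (t + 1)).Supp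
  contrib_pos : ∀ p ∈ (E.B E.n).edges, 0 < (E.contrib p).2
  contrib_le : ∀ p ∈ (E.B E.n).edges, (E.contrib p).2 ≤ E.n
  contrib_mem : ∀ p ∈ (E.B E.n).edges, p ∈ (E.B (E.contrib p).2).edges
  contrib_new : ∀ p ∈ (E.B E.n).edges, p ∉ (E.B ((E.contrib p).2 - 1)).edges

/-- The set of edges contributed by agent `α` at timestep `t`. -/
def Cset [DecidableEq Ag] (E : AX U Ag) (α : Ag) (t : ℕ) : Finset (U × U) :=
  (E.B E.n).edges.filter (fun p => E.contrib p = (α, t))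

end AX

/-- All agents hold the same stance at timestep `t`. -/
def ResolvedAt (st : Ag → ℕ → ℤ) (t : ℕ) : Prop := ∀ α β : Ag, st α t = st β t

/-- The AX (with an initial conflict) is resolved. -/
def Resolved (E : AX U Ag) (st : Ag → ℕ → ℤ) : Prop :=
  ¬ ResolvedAt st 0 ∧ ResolvedAt st E.n ∧ ∀ t, 0 < t → t < E.n → ¬ ResolvedAt st t

/-- The AX (with an initial conflict) is unresolved. -/
def Unresolved (E : AX U Ag) (st : Ag → ℕ → ℤ) : Prop :=
  ¬ ResolvedAt st 0 ∧ ∀ t, 0 < t → t ≤ E.n → ¬ ResolvedAt st t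

/-- Agent `α` is arguing for `e` at `t`: some agent has a strictly smaller stance. -/
def ArguingFor (st : Ag → ℕ → ℤ) (α : Ag) (t : ℕ) : Prop := ∃ β, st β t < st α t

/-- Agent `α` is arguing against `e` at `t`: some agent has a strictly greater stance. -/
def ArguingAgainst (st : Ag → ℕ → ℤ) (α : Ag) (t : ℕ) : Prop := ∃ β, st α t < st β t

section Behaviours

variable [DecidableEq U]

/-- Condition (1) of the greedy behaviour: `(a,b)` is a pair of the private QBAF `Qp`
not yet in the exchange BAF `Bp`, in line with the agent's state (`forE`). -/
def GreedyEligible (Qp : QBAF U) (Bp : BAF U) (e : U) (forE : Bool) (a b : U) : Prop :=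
  (a, b) ∈ Qp.edges ∧ (a, b) ∉ Bp.edges ∧
    (if forE then
        ((a, b) ∈ Qp.Supp ∧ (b ∈ Bp.pro e ∨ b = e)) ∨ ((a, b) ∈ Qp.Att ∧ b ∈ Bp.con e)
      else
        ((a, b) ∈ Qp.Supp ∧ b ∈ Bp.con e) ∨ ((a, b) ∈ Qp.Att ∧ (b ∈ Bp.pro e ∨ b = e)))

/-- A greedy choice: eligible, of maximal strength (2), and closest to `e` among
equally strong eligible pairs (3). -/
def GreedyChoice (Qp : QBAF U) (Bp : BAF U) (σα : U → ℝ) (e : U) (forE : Bool)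
    (a b : U) : Prop :=
  GreedyEligible Qp Bp e forE a b ∧
    (∀ a' b' : U, GreedyEligible Qp Bp e forE a' b' → σα a' ≤ σα a) ∧
    (∀ a'' b'' : U, GreedyEligible Qp Bp e forE a'' b'' → σα a'' = σα a →
      ¬ BAF.SPlt Qp.toBAF e a'' a)

/-- A contribution set is a correct greedy contribution: empty or a single greedy choice. -/
def GreedyOK (Qp : QBAF U) (Bp : BAF U) (σα : U → ℝ) (e : U) (forE : Bool)
    (C : Finset (U × U)) : Prop :=
  C = ∅ ∨ ∃ a b : U, C = {(a, b)} ∧ GreedyChoice Qp Bp σα e forE a b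

/-- Agent `α` exhibits greedy behaviour throughout the AX `E`. -/
def GreedyBehaviour [DecidableEq Ag] (E : AX U Ag) (e : U)
    (ev : Ag → QBAF U → U → ℝ) (st : Ag → ℕ → ℤ) (α : Ag) : Prop :=
  ∀ t, 0 < t → t ≤ E.n →
    E.Cset α t = ∅ ∨
      ∃ a b : U, E.Cset α t = {(a, b)} ∧
        (ArguingFor st α (t - 1) →
          GreedyChoice (E.Q α (t - 1)) (E.B (t - 1)) (ev α (E.Q α (t - 1))) e true a b) ∧
        (ArguingAgainst st α (t - 1) →
          GreedyChoice (E.Q α (t - 1)) (E.B (t - 1)) (ev α (E.Q α (t - 1))) e false a b)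

/-- The inner condition of the shallow behaviour for a contribution set `C`. -/
def ShallowInner (Qp : QBAF U) (Bp : BAF U) (σα : U → ℝ) (e : U) (forE : Bool)
    (C : Finset (U × U)) (max : ℕ) : Prop :=
  C.card ≤ max ∧ (∀ p ∈ C, p.2 = e) ∧
    (if forE then
        C ⊆ Qp.Supp \ Bp.Supp ∧
          ∀ p ∈ C, ∀ b : U, (b, e) ∈ Qp.Supp → (b, e) ∉ Bp.Supp ∪ C → σα b ≤ σα p.1
      else
        C ⊆ Qp.Att \ Bp.Att ∧
          ∀ p ∈ C, ∀ b : U, (b, e) ∈ Qp.Att → (b, e) ∉ Bp.Att ∪ C → σα b ≤ σα p.1)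

/-- A contribution set is a correct shallow contribution: it satisfies the inner condition
and is of maximal cardinality doing so. -/
def ShallowOK (Qp : QBAF U) (Bp : BAF U) (σα : U → ℝ) (e : U) (forE : Bool)
    (C : Finset (U × U)) (max : ℕ) : Prop :=
  ShallowInner Qp Bp σα e forE C max ∧
    ∀ C' : Finset (U × U), ShallowInner Qp Bp σα e forE C' max → C'.card ≤ C.card

/-- A private view of the exchange BAF `Bp` by an agent with private QBAF `Qα`. -/
def PrivateView (Bp : BAF U) (Qα : QBAF U) (V : QBAF U) : Prop :=
  Bp.Sub V.toBAF ∧ V.Sub Qα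

/-- `ε` is the perceived effect on `e` of the pair `(a,b)` for an agent with private QBAF
`Qp` given the exchange BAF `Bp` (under the DF-QuAD evaluation). -/
def PerceivedEffect (Qp : QBAF U) (Bp : BAF U) (e a b : U) (ε : ℝ) : Prop :=
  ∃ (V V' : QBAF U) (f f' : U → ℝ),
    PrivateView Bp Qp V ∧
    V'.X = insert a V.X ∧
    V'.Att = (V'.X ×ˢ V'.X) ∩ Qp.Att ∧
    V'.Supp = (V'.X ×ˢ V'.X) ∩ Qp.Supp ∧
    (∀ x ∈ V'.X, V'.bs x = Qp.bs x) ∧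
    IsDFQuADEval V f ∧ IsDFQuADEval V' f' ∧
    ε = f' e - f e

/-- A pair eligible for the counterfactual behaviour. -/
def CFEligible (Qp : QBAF U) (Bp : BAF U) (a b : U) : Prop :=
  (a, b) ∈ Qp.edges ∧ (a, b) ∉ Bp.edges ∧ a ∈ Qp.X ∧ a ∉ Bp.X ∧ b ∈ Bp.X

/-- Agent `α` exhibits counterfactual behaviour throughout the AX `E`,
where `εf α t a b` is the perceived effect of `(a,b)` at timestep `t`. -/
def CFBehaviour [DecidableEq Ag] (E : AX U Ag) (st : Ag → ℕ → ℤ)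
    (εf : Ag → ℕ → U → U → ℝ) (α : Ag) : Prop :=
  ∀ t, 0 < t → t ≤ E.n →
    E.Cset α t = ∅ ∨
      ∃ a b : U, E.Cset α t = {(a, b)} ∧
        CFEligible (E.Q α (t - 1)) (E.B (t - 1)) a b ∧
        (ArguingFor st α (t - 1) →
          0 < εf α t a b ∧
            ∀ a' b' : U, CFEligible (E.Q α (t - 1)) (E.B (t - 1)) a' b' →
              εf α t a' b' ≤ εf α t a b) ∧
        (ArguingAgainst st α (t - 1) →
          εf α t a b < 0 ∧
            ∀ a' b' : U, CFEligible (E.Q α (t - 1)) (E.B (t - 1)) a' b' →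
              εf α t a b ≤ εf α t a' b')

end Behaviours

section Alg10
lemma dfAgg_eq_prod (l : List ℝ) : dfAgg l = 1 - (l.map (fun v => 1 - v)).prod := by
  induction l with
  | nil => simp [dfAgg]
  | cons v vs ih => simp [dfAgg, ih]; ring

lemma dfComb_mem (v0 vm vp : ℝ) (h0 : 0 ≤ v0) (h1 : v0 ≤ 1)
    (hm0 : 0 ≤ vm) (hm1 : vm ≤ 1) (hp0 : 0 ≤ vp) (hp1 : vp ≤ 1) :
    0 ≤ dfComb v0 vm vp ∧ dfComb v0 vm vp ≤ 1 := by
  unfold dfComb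
  split
  · rw [abs_of_nonpos (by linarith)]
    constructor <;> nlinarith
  · rw [abs_of_pos (by push_neg at *; linarith)]
    constructor <;> nlinarith

lemma dfComb_mono (v0 vm vp vm' vp' : ℝ) (h0 : 0 ≤ v0) (h1 : v0 ≤ 1)
    (hd : vp - vm ≤ vp' - vm') :
    dfComb v0 vm vp ≤ dfComb v0 vm' vp' := by
  unfold dfComb
  split <;> split
  · rw [abs_of_nonpos (by linarith), abs_of_nonpos (by linarith)]; nlinarith
  · rw [abs_of_nonpos (by linarith), abs_of_pos (by push_neg at *; linarith)]; nlinarith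
  · push_neg at *; linarith
  · rw [abs_of_pos (by push_neg at *; linarith), abs_of_pos (by push_neg at *; linarith)]
    push_neg at *; nlinarith

variable {U : Type u} [DecidableEq U]


lemma dfAgg_finset (s : Finset U) (g : U → ℝ) :
    dfAgg (s.toList.map g) = 1 - ∏ x ∈ s, (1 - g x) := by
  rw [dfAgg_eq_prod, List.map_map]
  rw [show ((fun v => 1 - v) ∘ g) = (fun x => 1 - g x) from rfl, Finset.prod_map_toList]

lemma dfAgg_mem (s : Finset U) (g : U → ℝ) (h : ∀ x ∈ s, 0 ≤ g x ∧ g x ≤ 1) :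
    0 ≤ dfAgg (s.toList.map g) ∧ dfAgg (s.toList.map g) ≤ 1 := by
  rw [dfAgg_finset]
  have h1 : ∏ x ∈ s, (1 - g x) ≤ 1 :=
    Finset.prod_le_one (fun x hx => by linarith [(h x hx).2]) (fun x hx => by linarith [(h x hx).1])
  have h2 : 0 ≤ ∏ x ∈ s, (1 - g x) :=
    Finset.prod_nonneg (fun x hx => by linarith [(h x hx).2])
  constructor <;> linarith

lemma dfAgg_mono (s s' : Finset U) (g h : U → ℝ) (hsub : s ⊆ s')
    (hh : ∀ x ∈ s', 0 ≤ h x ∧ h x ≤ 1) (hgh : ∀ x ∈ s, g x ≤ h x) :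
    dfAgg (s.toList.map g) ≤ dfAgg (s'.toList.map h) := by
  rw [dfAgg_finset, dfAgg_finset]
  have key : ∏ x ∈ s', (1 - h x) ≤ ∏ x ∈ s, (1 - g x) := by
    rw [← Finset.prod_sdiff hsub]
    have e1 : ∏ x ∈ s' \ s, (1 - h x) ≤ 1 :=
      Finset.prod_le_one (fun x hx => by linarith [(hh x (Finset.mem_sdiff.mp hx).1).2])
        (fun x hx => by linarith [(hh x (Finset.mem_sdiff.mp hx).1).1])
    have e2 : ∏ x ∈ s, (1 - h x) ≤ ∏ x ∈ s, (1 - g x) :=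
      Finset.prod_le_prod (fun x hx => by linarith [(hh x (hsub hx)).2])
        (fun x hx => by linarith [hgh x hx])
    have e3 : 0 ≤ ∏ x ∈ s, (1 - h x) :=
      Finset.prod_nonneg (fun x hx => by linarith [(hh x (hsub hx)).2])
    have e4 : 0 ≤ ∏ x ∈ s' \ s, (1 - h x) :=
      Finset.prod_nonneg (fun x hx => by linarith [(hh x (Finset.mem_sdiff.mp hx).1).2])
    calc (∏ x ∈ s' \ s, (1 - h x)) * ∏ x ∈ s, (1 - h x)
        ≤ 1 * ∏ x ∈ s, (1 - h x) := mul_le_mul_of_nonneg_right e1 e3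
      _ ≤ ∏ x ∈ s, (1 - g x) := by rw [one_mul]; exact e2
  linarith

end Alg10

section Aux10
set_option linter.unusedSectionVars false
open BAF
variable {U : Type u} [DecidableEq U]

lemma isPath_concat {B : BAF U} {x y z : U} {p : List (U × U)}
    (hp : B.IsPath x y p) (h : (y, z) ∈ B.edges) : B.IsPath x z (p ++ [(y, z)]) := by
  induction hp with
  | single h' => exact IsPath.cons h' (IsPath.single h)
  | cons h' hp ih => exact IsPath.cons h' (ih h)

lemma attCount_append (B : BAF U) (p q : List (U × U)) :
    B.attCount (p ++ q) = B.attCount p + B.attCount q := by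
  simp [BAF.attCount, List.filter_append]

lemma edge_mem_X {B : BAF U} {e : U} (hB : B.IsFor e) {x y : U} (h : (x, y) ∈ B.edges) :
    x ∈ B.X ∧ y ∈ B.X := by
  rcases Finset.mem_union.mp h with h | h
  · exact hB.att_mem _ h
  · exact hB.supp_mem _ h

noncomputable def rankTo (B : BAF U) (x : U) : ℕ :=
  (@Finset.filter _ (fun z => ∃ p, B.IsPath z x p) (Classical.decPred _) B.X).card

lemma rankTo_lt {B : BAF U} {e : U} (hB : B.IsFor e) {y x : U} (h : (y, x) ∈ B.edges) :
    rankTo B y < rankTo B x := by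
  classical
  set Sy := @Finset.filter _ (fun z => ∃ p, B.IsPath z y p) (Classical.decPred _) B.X with hSy
  set Sx := @Finset.filter _ (fun z => ∃ p, B.IsPath z x p) (Classical.decPred _) B.X with hSx
  have hyX : y ∈ B.X := (edge_mem_X hB h).1
  have hins : insert y Sy ⊆ Sx := by
    intro z hz
    rcases Finset.mem_insert.mp hz with rfl | hz
    · exact Finset.mem_filter.mpr ⟨hyX, [(z, x)], IsPath.single h⟩
    · obtain ⟨hzX, p, hp⟩ := Finset.mem_filter.mp hz
      exact Finset.mem_filter.mpr ⟨hzX, _, isPath_concat hp h⟩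
  have hy : y ∉ Sy := by
    intro hy
    obtain ⟨_, p, hp⟩ := Finset.mem_filter.mp hy
    exact hB.acyclic y p hp
  calc rankTo B y = Sy.card := rfl
    _ < (insert y Sy).card := by rw [Finset.card_insert_of_notMem hy]; omega
    _ ≤ Sx.card := Finset.card_le_card hins

lemma mem_attackers {Q : QBAF U} {b x : U} : b ∈ Q.attackers x ↔ (b, x) ∈ Q.Att := by
  constructor
  · rintro hb
    obtain ⟨q, hq, rfl⟩ := Finset.mem_image.mp hb
    obtain ⟨hq1, hq2⟩ := Finset.mem_filter.mp hq
    rw [show ((q.1, x) : U × U) = q from Prod.ext rfl hq2.symm]; exact hq1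
  · intro h
    exact Finset.mem_image.mpr ⟨(b, x), Finset.mem_filter.mpr ⟨h, rfl⟩, rfl⟩

lemma mem_supporters {Q : QBAF U} {b x : U} : b ∈ Q.supporters x ↔ (b, x) ∈ Q.Supp := by
  constructor
  · rintro hb
    obtain ⟨q, hq, rfl⟩ := Finset.mem_image.mp hb
    obtain ⟨hq1, hq2⟩ := Finset.mem_filter.mp hq
    rw [show ((q.1, x) : U × U) = q from Prod.ext rfl hq2.symm]; exact hq1
  · intro h
    exact Finset.mem_image.mpr ⟨(b, x), Finset.mem_filter.mpr ⟨h, rfl⟩, rfl⟩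

lemma eval_bounds {Q : QBAF U} {e : U} (hQ : Q.IsFor e) {f : U → ℝ}
    (hf : IsDFQuADEval Q f) : ∀ x ∈ Q.X, 0 ≤ f x ∧ f x ≤ 1 := by
  have key : ∀ n, ∀ x ∈ Q.X, rankTo Q.toBAF x < n → 0 ≤ f x ∧ f x ≤ 1 := by
    intro n
    induction n with
    | zero => intro x _ h; omega
    | succ n ih =>
      intro x hx hr
      have hb : ∀ b ∈ Q.attackers x ∪ Q.supporters x, 0 ≤ f b ∧ f b ≤ 1 := by
        intro b hb
        have hedge : (b, x) ∈ Q.toBAF.edges := by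
          rcases Finset.mem_union.mp hb with hb | hb
          · exact Finset.mem_union_left _ (mem_attackers.mp hb)
          · exact Finset.mem_union_right _ (mem_supporters.mp hb)
        have := rankTo_lt hQ.1 hedge
        exact ih b (edge_mem_X hQ.1 hedge).1 (by omega)
      rw [hf x hx]
      have h0 := hQ.2 x hx
      exact dfComb_mem _ _ _ h0.1 h0.2
        (dfAgg_mem _ f fun b h => hb b (Finset.mem_union_left _ h)).1
        (dfAgg_mem _ f fun b h => hb b (Finset.mem_union_left _ h)).2
        (dfAgg_mem _ f fun b h => hb b (Finset.mem_union_right _ h)).1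
        (dfAgg_mem _ f fun b h => hb b (Finset.mem_union_right _ h)).2
  exact fun x hx => key (rankTo Q.toBAF x + 1) x hx (by omega)

end Aux10

/-- a newly added argument is pro if it increases the DF-QuAD evaluation
of `e`, and con if it decreases it. -/
theorem statement10 {U : Type u} [DecidableEq U] (e : U) (Q Q' : QBAF U)
    (hQ : Q.IsFor e) (hQ' : Q'.IsFor e) (hsub : Q.Sub Q')
    (a : U) (ha : a ∉ Q.X) (hX : Q'.X = insert a Q.X)
    (hedge : ∀ p ∈ Q'.edges, p ∉ Q.edges → p.1 = a ∨ p.2 = a)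
    (f f' : U → ℝ) (hf : IsDFQuADEval Q f) (hf' : IsDFQuADEval Q' f') :
    (f e < f' e → a ∈ Q'.toBAF.pro e) ∧ (f' e < f e → a ∈ Q'.toBAF.con e) := by
  classical
  have hE' : Q'.toBAF.edges = Q'.Att ∪ Q'.Supp := rfl
  have hbounds : ∀ x ∈ Q.X, 0 ≤ f x ∧ f x ≤ 1 := eval_bounds hQ hf
  have hbounds' : ∀ x ∈ Q'.X, 0 ≤ f' x ∧ f' x ≤ 1 := eval_bounds hQ' hf'
  have hbs : ∀ x ∈ Q.X, Q'.bs x = Q.bs x := hsub.2.2.2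
  -- classification of edges into an old vertex
  have hattcase : ∀ b x, x ∈ Q.X → (b, x) ∈ Q'.Att → (b, x) ∈ Q.Att ∨ b = a := by
    intro b x hx hbx
    by_cases h : (b, x) ∈ Q.Att
    · exact Or.inl h
    have hns : (b, x) ∉ Q.Supp := fun hs =>
      hQ'.1.disj (b, x) ⟨hbx, hsub.2.2.1 hs⟩
    have hnold : (b, x) ∉ Q.edges := by
      simp only [QBAF.edges, Finset.mem_union]; tauto
    have hnew : (b, x) ∈ Q'.edges := Finset.mem_union_left _ hbx
    rcases hedge _ hnew hnold with h1 | h2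
    · exact Or.inr h1
    · exact absurd (h2 ▸ hx) ha
  have hsuppcase : ∀ b x, x ∈ Q.X → (b, x) ∈ Q'.Supp → (b, x) ∈ Q.Supp ∨ b = a := by
    intro b x hx hbx
    by_cases h : (b, x) ∈ Q.Supp
    · exact Or.inl h
    have hns : (b, x) ∉ Q.Att := fun hs =>
      hQ'.1.disj (b, x) ⟨hsub.2.1 hs, hbx⟩
    have hnold : (b, x) ∉ Q.edges := by
      simp only [QBAF.edges, Finset.mem_union]; tauto
    have hnew : (b, x) ∈ Q'.edges := Finset.mem_union_right _ hbx
    rcases hedge _ hnew hnold with h1 | h2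
    · exact Or.inr h1
    · exact absurd (h2 ▸ hx) ha
  -- path extension with parity
  have hextAtt : ∀ {x y : U} {p : List (U × U)}, Q'.toBAF.IsPath a x p → (x, y) ∈ Q'.Att →
      Q'.toBAF.IsPath a y (p ++ [(x, y)]) ∧
        Q'.toBAF.attCount (p ++ [(x, y)]) = Q'.toBAF.attCount p + 1 := by
    intro x y p hp hxy
    refine ⟨isPath_concat hp (hE' ▸ Finset.mem_union_left _ hxy), ?_⟩
    rw [attCount_append]
    simp [BAF.attCount, QBAF.toBAF, hxy]
  have hextSupp : ∀ {x y : U} {p : List (U × U)}, Q'.toBAF.IsPath a x p → (x, y) ∈ Q'.Supp →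
      Q'.toBAF.IsPath a y (p ++ [(x, y)]) ∧
        Q'.toBAF.attCount (p ++ [(x, y)]) = Q'.toBAF.attCount p := by
    intro x y p hp hxy
    have hna : (x, y) ∉ Q'.Att := fun h => hQ'.1.disj (x, y) ⟨h, hxy⟩
    refine ⟨isPath_concat hp (hE' ▸ Finset.mem_union_right _ hxy), ?_⟩
    rw [attCount_append]
    simp [BAF.attCount, QBAF.toBAF, hna]
  -- main induction
  have key : ∀ n, ∀ x ∈ Q.X, rankTo Q'.toBAF x < n →
      (¬ (∃ p, Q'.toBAF.IsPath a x p ∧ Odd (Q'.toBAF.attCount p)) → f x ≤ f' x) ∧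
      (¬ (∃ p, Q'.toBAF.IsPath a x p ∧ Even (Q'.toBAF.attCount p)) → f' x ≤ f x) := by
    intro n
    induction n with
    | zero => intro x _ h; omega
    | succ n ih =>
      intro x hx hr
      have hx' : x ∈ Q'.X := hsub.1 hx
      have hxa : x ≠ a := fun h => ha (h ▸ hx)
      -- memberships / ranks for neighbours
      have hrankA : ∀ b, (b, x) ∈ Q'.Att → rankTo Q'.toBAF b < n := by
        intro b hb
        have := rankTo_lt hQ'.1 (hE' ▸ Finset.mem_union_left _ hb : (b, x) ∈ Q'.toBAF.edges)
        omega
      have hrankS : ∀ b, (b, x) ∈ Q'.Supp → rankTo Q'.toBAF b < n := by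
        intro b hb
        have := rankTo_lt hQ'.1 (hE' ▸ Finset.mem_union_right _ hb : (b, x) ∈ Q'.toBAF.edges)
        omega
      have hfx : f x = dfComb (Q.bs x) (dfAgg ((Q.attackers x).toList.map f))
          (dfAgg ((Q.supporters x).toList.map f)) := hf x hx
      have hfx' : f' x = dfComb (Q.bs x) (dfAgg ((Q'.attackers x).toList.map f'))
          (dfAgg ((Q'.supporters x).toList.map f')) := by
        rw [hf' x hx', hbs x hx]
      have hv0 := hQ.2 x hx
      have hattX : ∀ b ∈ Q.attackers x, b ∈ Q.X := fun b hb =>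
        (hQ.1.att_mem _ (mem_attackers.mp hb)).1
      have hsuppX : ∀ b ∈ Q.supporters x, b ∈ Q.X := fun b hb =>
        (hQ.1.supp_mem _ (mem_supporters.mp hb)).1
      have hattX' : ∀ b ∈ Q'.attackers x, b ∈ Q'.X := fun b hb =>
        (hQ'.1.att_mem _ (mem_attackers.mp hb)).1
      have hsuppX' : ∀ b ∈ Q'.supporters x, b ∈ Q'.X := fun b hb =>
        (hQ'.1.supp_mem _ (mem_supporters.mp hb)).1
      have hasub : Q.attackers x ⊆ Q'.attackers x := fun b hb =>
        mem_attackers.mpr (hsub.2.1 (mem_attackers.mp hb))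
      have hssub : Q.supporters x ⊆ Q'.supporters x := fun b hb =>
        mem_supporters.mpr (hsub.2.2.1 (mem_supporters.mp hb))
      constructor
      · -- no odd path to x : f x ≤ f' x
        intro hNoCon
        have hSa : Q'.attackers x = Q.attackers x := by
          apply Finset.Subset.antisymm _ hasub
          intro b hb
          have hbx := mem_attackers.mp hb
          rcases hattcase b x hx hbx with h | rfl
          · exact mem_attackers.mpr h
          · exact absurd ⟨[(b, x)], BAF.IsPath.single (hE' ▸ Finset.mem_union_left _ hbx),
              by simp [BAF.attCount, QBAF.toBAF, hbx]⟩ hNoCon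
        have hattIH : ∀ b ∈ Q.attackers x, f' b ≤ f b := by
          intro b hb
          have hbx := mem_attackers.mp hb
          have hbx' : (b, x) ∈ Q'.Att := hsub.2.1 hbx
          refine (ih b (hattX b hb) (hrankA b hbx')).2 ?_
          rintro ⟨p, hp, hev⟩
          exact hNoCon ⟨_, (hextAtt hp hbx').1, by rw [(hextAtt hp hbx').2]; exact hev.add_one⟩
        have hsuppIH : ∀ b ∈ Q.supporters x, f b ≤ f' b := by
          intro b hb
          have hbx := mem_supporters.mp hb
          have hbx' : (b, x) ∈ Q'.Supp := hsub.2.2.1 hbx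
          refine (ih b (hsuppX b hb) (hrankS b hbx')).1 ?_
          rintro ⟨p, hp, hodd⟩
          exact hNoCon ⟨_, (hextSupp hp hbx').1, by rw [(hextSupp hp hbx').2]; exact hodd⟩
        rw [hfx, hfx', hSa]
        apply dfComb_mono _ _ _ _ _ hv0.1 hv0.2
        have e1 : dfAgg ((Q.attackers x).toList.map f') ≤ dfAgg ((Q.attackers x).toList.map f) :=
          dfAgg_mono _ _ _ _ (Finset.Subset.refl _) (fun b hb => hbounds b (hattX b hb)) hattIH
        have e2 : dfAgg ((Q.supporters x).toList.map f) ≤ dfAgg ((Q'.supporters x).toList.map f') :=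
          dfAgg_mono _ _ _ _ hssub (fun b hb => hbounds' b (hsuppX' b hb)) hsuppIH
        linarith
      · -- no even path to x : f' x ≤ f x
        intro hNoPro
        have hSs : Q'.supporters x = Q.supporters x := by
          apply Finset.Subset.antisymm _ hssub
          intro b hb
          have hbx := mem_supporters.mp hb
          rcases hsuppcase b x hx hbx with h | rfl
          · exact mem_supporters.mpr h
          · refine absurd ⟨[(b, x)], BAF.IsPath.single (hE' ▸ Finset.mem_union_right _ hbx),
              ?_⟩ hNoPro
            have hna : (b, x) ∉ Q'.Att := fun h => hQ'.1.disj (b, x) ⟨h, hbx⟩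
            simp [BAF.attCount, QBAF.toBAF, hna]
        have hattIH : ∀ b ∈ Q.attackers x, f b ≤ f' b := by
          intro b hb
          have hbx := mem_attackers.mp hb
          have hbx' : (b, x) ∈ Q'.Att := hsub.2.1 hbx
          refine (ih b (hattX b hb) (hrankA b hbx')).1 ?_
          rintro ⟨p, hp, hodd⟩
          refine hNoPro ⟨_, (hextAtt hp hbx').1, ?_⟩
          rw [(hextAtt hp hbx').2]
          exact hodd.add_one
        have hsuppIH : ∀ b ∈ Q.supporters x, f' b ≤ f b := by
          intro b hb
          have hbx := mem_supporters.mp hb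
          have hbx' : (b, x) ∈ Q'.Supp := hsub.2.2.1 hbx
          refine (ih b (hsuppX b hb) (hrankS b hbx')).2 ?_
          rintro ⟨p, hp, hev⟩
          exact hNoPro ⟨_, (hextSupp hp hbx').1, by rw [(hextSupp hp hbx').2]; exact hev⟩
        rw [hfx, hfx', hSs]
        apply dfComb_mono _ _ _ _ _ hv0.1 hv0.2
        have e1 : dfAgg ((Q.attackers x).toList.map f) ≤ dfAgg ((Q'.attackers x).toList.map f') :=
          dfAgg_mono _ _ _ _ hasub (fun b hb => hbounds' b (hattX' b hb)) hattIH
        have e2 : dfAgg ((Q.supporters x).toList.map f') ≤ dfAgg ((Q.supporters x).toList.map f) :=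
          dfAgg_mono _ _ _ _ (Finset.Subset.refl _) (fun b hb => hbounds b (hsuppX b hb)) hsuppIH
        linarith
  have heX : e ∈ Q.X := hQ.1.e_mem
  have haX' : a ∈ Q'.toBAF.X := by
    show a ∈ Q'.X
    rw [hX]; exact Finset.mem_insert_self a Q.X
  constructor
  · intro hlt
    refine ⟨haX', ?_⟩
    by_contra hc
    push_neg at hc
    have := (key (rankTo Q'.toBAF e + 1) e heX (by omega)).2 (by
      rintro ⟨p, hp, hev⟩; exact (hc p hp) hev)
    linarith
  · intro hlt
    refine ⟨haX', ?_⟩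
    by_contra hc
    push_neg at hc
    have := (key (rankTo Q'.toBAF e + 1) e heX (by omega)).1 (by
      rintro ⟨p, hp, hodd⟩; exact (hc p hp) hodd)
    linarith
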